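/- arXiv:1811.03942 — 2 statements merged into one kernel-verified Lean document; each statement's English description precedes it below -/
import Mathlib

section
/- Let (X,S) be a minimal subshift over a finite alphabet A and let x ∈ X. Then Per(x) = ℤℙ'(X,S): the set of common differences p ≥ 1 for which x has a constant arithmetic subsequence (x_{k+np})_{n∈ℤ} equals the set of positive multiples of the integers p ≥ 1 that are an essential period of some point of X for some letter cylinder [a]. -/
/-- The `k`-th power of the shift on two-sided sequences: `(S^k x) n = x (n + k)`. -/
def shiftZ {A : Type*} (k : ℤ) (x : ℤ → A) : ℤ → A := fun n => x (n + k)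

/-- The period-`p` skeleton of `z` relative to `U`:
`PS_p(z,U) = {k ∈ ℤ : S^{k+np} z ∈ U for all n ∈ ℤ}`. -/
def periodSkeleton {A : Type*} (p : ℕ) (z : ℤ → A) (U : Set (ℤ → A)) : Set ℤ :=
  {k : ℤ | ∀ n : ℤ, shiftZ (k + n * p) z ∈ U}

/-- `p` is an essential period of `z` for `U`. -/
def IsEssentialPeriod {A : Type*} (p : ℕ) (z : ℤ → A) (U : Set (ℤ → A)) : Prop :=
  periodSkeleton p z U ≠ ∅ ∧
    ∀ q : ℤ, periodSkeleton p z U = (fun k => k - q) '' periodSkeleton p z U →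
      (p : ℤ) ∣ q

lemma skel_eq {A : Type*} (p : ℕ) (x : ℤ → A) (a : A) :
    periodSkeleton p x {w : ℤ → A | w 0 = a} = {m : ℤ | ∀ n : ℤ, x (m + n * p) = a} := by
  ext m
  simp [periodSkeleton, shiftZ]

/-- The stabilizer subgroup of the translation action on a set of integers. -/
def stabGroup (S : Set ℤ) : AddSubgroup ℤ where
  carrier := {q : ℤ | ∀ m : ℤ, m + q ∈ S ↔ m ∈ S}
  zero_mem' := by intro m; simp
  add_mem' := by
    intro q1 q2 h1 h2 m
    have : m + (q1 + q2) = (m + q1) + q2 := by ring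
    rw [this, h2, h1]
  neg_mem' := by
    intro q h m
    have := h (m + -q)
    rw [show m + -q + q = m by ring] at this
    exact this.symm

lemma essential_of_period {A : Type*} (x : ℤ → A) (a : A) (p : ℕ) (hp : 1 ≤ p)
    (k : ℤ) (hk : ∀ n : ℤ, x (k + n * p) = a) :
    ∃ d : ℕ, 1 ≤ d ∧ d ∣ p ∧ IsEssentialPeriod d x {w : ℤ → A | w 0 = a} := by
  set S : Set ℤ := {m : ℤ | ∀ n : ℤ, x (m + n * p) = a} with hS
  set H : AddSubgroup ℤ := stabGroup S with hH
  have hmemH : ∀ q : ℤ, q ∈ H ↔ ∀ m : ℤ, m + q ∈ S ↔ m ∈ S := fun q => Iff.rfl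
  have hpH : (p : ℤ) ∈ H := by
    rw [hmemH]
    intro m
    constructor
    · intro h n
      have := h (n - 1)
      rwa [show m + (p:ℤ) + (n - 1) * p = m + n * p by ring] at this
    · intro h n
      have := h (n + 1)
      rwa [show m + (n + 1) * p = m + (p:ℤ) + n * p by ring] at this
  obtain ⟨g, hgH⟩ := Int.subgroup_cyclic H
  have hdvd : ∀ q : ℤ, q ∈ H → g ∣ q := by
    intro q hq
    rw [hgH, AddSubgroup.mem_closure_singleton] at hq
    obtain ⟨n, hn⟩ := hq
    exact ⟨n, by rw [← hn, zsmul_eq_mul]; push_cast; ring⟩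
  have hgne : g ≠ 0 := by
    intro h
    obtain ⟨c, hc⟩ := hdvd _ hpH
    rw [h, zero_mul] at hc
    omega
  have hgmem : g ∈ H := by
    rw [hgH]
    exact AddSubgroup.subset_closure rfl
  set d : ℕ := g.natAbs with hd
  have hd1 : 1 ≤ d := by omega
  have hdp : d ∣ p := by
    have := Int.natAbs_dvd_natAbs.mpr (hdvd _ hpH)
    simpa using this
  have hdH : (d : ℤ) ∈ H := by
    rcases Int.natAbs_eq g with h | h
    · rw [← h] at *; exact hgmem
    · have : (d : ℤ) = -g := by omega
      rw [this]; exact H.neg_mem hgmem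
  -- the skeleton for d equals the skeleton for p
  have hSd : {m : ℤ | ∀ n : ℤ, x (m + n * d) = a} = S := by
    obtain ⟨e, he⟩ := hdp
    ext m
    constructor
    · intro h n
      have := h (n * e)
      rwa [show m + (n * e) * (d:ℤ) = m + n * p by push_cast [he]; ring] at this
    · intro h n
      have hmul : (n * (d : ℤ)) ∈ H := by
        have := AddSubgroup.zsmul_mem H hdH n
        rwa [zsmul_eq_mul] at this
      have hmem : m + n * d ∈ S := ((hmemH _).mp hmul m).mpr h
      have := hmem 0
      simpa using this
  refine ⟨d, hd1, hdp, ?_, ?_⟩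
  · rw [skel_eq, hSd]
    intro h
    have : k ∈ S := hk
    rw [← Set.not_nonempty_iff_eq_empty] at h
    exact h ⟨k, this⟩
  · intro q hq
    rw [skel_eq, hSd] at hq
    have hqH : q ∈ H := by
      rw [hmemH]
      intro m
      constructor
      · intro h
        rw [hq]
        exact ⟨m + q, h, by ring⟩
      · intro h
        rw [hq] at h
        obtain ⟨y, hy, hy2⟩ := h
        simp only at hy2
        have hym : y = m + q := by omega
        rwa [← hym]
    have := hdvd q hqH
    exact (Int.natAbs_dvd.mpr this)

lemma transfer {A : Type*} [TopologicalSpace A] [DiscreteTopology A]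
    (z x : ℤ → A) (p : ℕ) (hp : 1 ≤ p) (a : A) (k : ℤ)
    (hk : ∀ n : ℤ, z (k + n * p) = a)
    (hcl : x ∈ closure {w : ℤ → A | ∃ t : ℤ, w = shiftZ t z}) :
    ∃ k' : ℤ, ∀ n : ℤ, x (k' + n * p) = a := by
  have hp0 : (0:ℤ) < p := by exact_mod_cast hp
  have key : ∀ N : ℕ, ∃ r : ℤ, 0 ≤ r ∧ r < p ∧ ∀ n : ℤ, n.natAbs ≤ N → x (r + n * p) = a := by
    intro N
    set M : ℤ := p * (N + 1) with hM
    set V : Set (ℤ → A) := (↑(Finset.Icc (-M) M) : Set ℤ).pi (fun i => {x i}) with hV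
    have hVopen : IsOpen V := isOpen_set_pi (Finset.Icc (-M) M).finite_toSet
      (fun i _ => isOpen_discrete _)
    have hxV : x ∈ V := fun i _ => rfl
    obtain ⟨w, hwV, t, rfl⟩ := mem_closure_iff.mp hcl V hVopen hxV
    refine ⟨(k - t) % p, Int.emod_nonneg _ (by omega), Int.emod_lt_of_pos _ hp0, ?_⟩
    intro n hn
    set r : ℤ := (k - t) % p with hr
    set q : ℤ := (k - t) / p with hq
    have hdiv : (p:ℤ) * q + r = k - t := Int.mul_ediv_add_emod (k - t) p
    have hr0 : 0 ≤ r := Int.emod_nonneg _ (by omega)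
    have hrp : r < p := Int.emod_lt_of_pos _ hp0
    have hnabs : |n| ≤ (N : ℤ) := by
      rw [Int.abs_eq_natAbs]; exact_mod_cast hn
    have hn1 : -(N:ℤ) ≤ n := by omega
    have hn2 : n ≤ (N:ℤ) := by omega
    have hmem : r + n * p ∈ (↑(Finset.Icc (-M) M) : Set ℤ) := by
      simp only [Finset.coe_Icc, Set.mem_Icc]
      constructor
      · nlinarith
      · nlinarith
    have hw := hwV _ hmem
    simp only [Set.mem_singleton_iff] at hw
    have : shiftZ t z (r + n * p) = z (k + (n - q) * p) := by
      simp only [shiftZ]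
      congr 1
      linear_combination hdiv
    rw [← hw, this, hk]
  choose f hf1 hf2 hf3 using key
  have hlt : ∀ N, (f N).toNat < p := by
    intro N
    have := hf1 N; have := hf2 N
    omega
  set g : ℕ → Fin p := fun N => ⟨(f N).toNat, hlt N⟩ with hg
  obtain ⟨b, hb⟩ := Finite.exists_infinite_fiber g
  have hbinf : (g ⁻¹' {b}).Infinite := Set.infinite_coe_iff.mp hb
  refine ⟨((b : ℕ) : ℤ), ?_⟩
  intro n
  obtain ⟨N, hN, hN2⟩ := hbinf.exists_notMem_finset (Finset.range (n.natAbs + 1))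
  have hN2' : n.natAbs < N := by
    by_contra h
    exact hN2 (Finset.mem_range.mpr (by omega))
  have hgN : g N = b := hN
  have hfN : f N = ((b : ℕ) : ℤ) := by
    have h1 : (f N).toNat = (b : ℕ) := by rw [← hgN]
    have := hf1 N
    omega
  have := hf3 N n (by omega)
  rwa [hfN] at this

/-- Let `(X,S)` be a minimal subshift over a finite alphabet `A` and `x ∈ X`. Then
`Per(x) = ℤℙ'(X,S)`: the set of common differences `p ≥ 1` of constant arithmetic
subsequences of `x` equals the set of positive multiples of the integers `p ≥ 1` that
are an essential period of some point of `X` for some letter cylinder `[a]`. -/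
theorem per_eq_multiples_of_essential_periods
    {A : Type*} [Fintype A] [TopologicalSpace A] [DiscreteTopology A]
    (X : Set (ℤ → A)) (hXne : X.Nonempty) (hXclosed : IsClosed X)
    (hXinv : ∀ x ∈ X, shiftZ 1 x ∈ X) (hXinv' : ∀ x ∈ X, shiftZ (-1) x ∈ X)
    (hmin : ∀ x ∈ X, X ⊆ closure {z | ∃ k : ℤ, z = shiftZ k x})
    (x : ℤ → A) (hx : x ∈ X) :
    {p : ℕ | 1 ≤ p ∧ ∃ (a : A) (k : ℤ), ∀ n : ℤ, x (k + n * p) = a} =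
      {m : ℕ | 1 ≤ m ∧ ∃ p : ℕ, 1 ≤ p ∧
        (∃ z ∈ X, ∃ a : A, IsEssentialPeriod p z {w : ℤ → A | w 0 = a}) ∧ p ∣ m} := by
  ext m
  constructor
  · rintro ⟨hm1, a, k, hk⟩
    obtain ⟨d, hd1, hdm, hess⟩ := essential_of_period x a m hm1 k hk
    exact ⟨hm1, d, hd1, ⟨x, hx, a, hess⟩, hdm⟩
  · rintro ⟨hm1, p, hp1, ⟨z, hz, a, hess⟩, hpm⟩
    refine ⟨hm1, a, ?_⟩
    have hne : (periodSkeleton p z {w : ℤ → A | w 0 = a}).Nonempty :=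
      Set.nonempty_iff_ne_empty.mpr hess.1
    rw [skel_eq] at hne
    obtain ⟨k, hk⟩ := hne
    obtain ⟨k', hk'⟩ := transfer z x p hp1 a k hk (hmin z hz hx)
    obtain ⟨e, he⟩ := hpm
    refine ⟨k', fun n => ?_⟩
    have := hk' (n * e)
    rwa [show k' + (n * e) * (p:ℤ) = k' + n * m by push_cast [he]; ring] at this
end

section
/- Let y be a sturmian sequence and let z be a Toeplitz sequence. Then L(y) ∩ L(z) is finite; that is, y and z have only finitely many factors in common. -/
/-- The word `w` is a (finite) factor of the two-sided sequence `u`. -/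
def IsFactor {B : Type*} (w : List B) (u : ℤ → B) : Prop :=
  ∃ i : ℤ, ∀ t : Fin w.length, u (i + t) = w.get t

/-- `x` is uniformly recurrent. -/
def UniformlyRecurrent {B : Type*} (x : ℤ → B) : Prop :=
  ∀ (m : ℕ) (i : ℤ), ∃ B' : ℕ, ∀ k : ℤ, ∃ j : ℤ, k ≤ j ∧ j ≤ k + B' ∧
    ∀ t : Fin m, x (j + t) = x (i + t)

/-- The complexity function of `x`. -/
noncomputable def complexity {B : Type*} (x : ℤ → B) (n : ℕ) : ℕ :=
  Nat.card {w : Fin n → B | ∃ i : ℤ, ∀ j : Fin n, w j = x (i + j)}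

/-- `x` is sturmian: uniformly recurrent with complexity `n + 1`. -/
def IsSturmian {B : Type*} (x : ℤ → B) : Prop :=
  UniformlyRecurrent x ∧ ∀ n : ℕ, complexity x n = n + 1

/-- `x` is a Toeplitz sequence. -/
def IsToeplitz {B : Type*} (x : ℤ → B) : Prop :=
  ∀ k : ℤ, ∃ p : ℕ, 1 < p ∧ ∀ n : ℤ, x (k + n * p) = x k

namespace STP
section
set_option linter.unusedSectionVars false
set_option linter.unusedTactic false
set_option linter.unusedVariables false
set_option maxHeartbeats 1000000
variable {B : Type*} [Fintype B]

def FSet (u : ℤ → B) (m : ℕ) : Set (Fin m → B) := {w | ∃ i : ℤ, ∀ t : Fin m, w t = u (i + t)}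

def Periodic (u : ℤ → B) (N : ℕ) : Prop := ∀ i : ℤ, u (i + N) = u i

def Subf (x y : ℤ → B) : Prop :=
  ∀ (m : ℕ) (i : ℤ), ∃ j : ℤ, ∀ t : Fin m, x (i + t) = y (j + t)

lemma complexity_eq_ncard (u : ℤ → B) (n : ℕ) : complexity u n = (FSet u n).ncard :=
  Nat.card_coe_set_eq _

lemma subf_refl (u : ℤ → B) : Subf u u := fun _ i => ⟨i, fun _ => rfl⟩

lemma fset_subset_of_subf {x y : ℤ → B} (h : Subf x y) (m : ℕ) : FSet x m ⊆ FSet y m := by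
  rintro w ⟨i, hw⟩
  obtain ⟨j, hj⟩ := h m i
  exact ⟨j, fun t => (hw t).trans (hj t)⟩

lemma subf_of_ur {x y : ℤ → B} (hy : UniformlyRecurrent y) (h : Subf x y) : Subf y x := by
  intro m i
  obtain ⟨Bd, hBd⟩ := hy m i
  obtain ⟨i', hi'⟩ := h (m + Bd) 0
  obtain ⟨j, hj1, hj2, hj3⟩ := hBd i'
  refine ⟨j - i', fun t => ?_⟩
  have ht : (t : ℤ) < m := by exact_mod_cast t.2
  have ht0 : (0 : ℤ) ≤ (t : ℤ) := Int.ofNat_nonneg _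
  have h1 : (0 : ℤ) ≤ j - i' + t := by omega
  have h2 : j - i' + (t : ℤ) < (m : ℤ) + Bd := by omega
  have hlt : (j - i' + (t : ℤ)).toNat < m + Bd := by omega
  have h5 := hi' ⟨(j - i' + (t : ℤ)).toNat, hlt⟩
  simp only [Fin.val_mk] at h5
  rw [Int.toNat_of_nonneg h1] at h5
  have e1 : i' + (j - i' + (t : ℤ)) = j + (t : ℤ) := by ring
  have e2 : (0 : ℤ) + (j - i' + (t : ℤ)) = j - i' + (t : ℤ) := by ring
  rw [e1, e2] at h5
  exact (hj3 t).symm.trans h5.symm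

lemma window_mem (u : ℤ → B) (m : ℕ) (i : ℤ) : (fun t : Fin m => u (i + t)) ∈ FSet u m :=
  ⟨i, fun _ => rfl⟩

lemma fset_zero (u : ℤ → B) : FSet u 0 = Set.univ := by
  ext w; simp only [Set.mem_univ, iff_true]
  exact ⟨0, fun t => t.elim0⟩

lemma ncard_fset_zero (u : ℤ → B) : (FSet u 0).ncard = 1 := by
  rw [fset_zero, Set.ncard_univ]
  simp [Nat.card_eq_fintype_card]

lemma periodic_shift {u : ℤ → B} {N : ℕ} (hN : Periodic u N) :
    ∀ (q : ℤ) (t : ℤ), u (t + q * N) = u t := by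
  intro q
  induction q using Int.induction_on with
  | zero => simp
  | succ k ih => intro t
                 have := hN (t + k * N)
                 rw [show t + (k + 1 : ℤ) * N = t + k * N + N by ring]
                 rw [this, ih t]
  | pred k ih => intro t
                 have := hN (t + (-k - 1 : ℤ) * N)
                 rw [show t + (-k - 1 : ℤ) * N + N = t + (-(k:ℤ)) * N by ring] at this
                 rw [show t + (-(k:ℤ) - 1) * N = t + (-k - 1 : ℤ) * N by norm_num]
                 rw [← this, ih t]

lemma ncard_le_of_periodic {u : ℤ → B} {N : ℕ} (hN : Periodic u N) (hN1 : 1 ≤ N) (m : ℕ) :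
    (FSet u m).ncard ≤ N := by
  have hsub : FSet u m ⊆ (fun r : Fin N => fun t : Fin m => u ((r : ℤ) + t)) '' Set.univ := by
    rintro w ⟨i, hw⟩
    have hNpos : (0 : ℤ) < N := by exact_mod_cast hN1
    have h1 : 0 ≤ i.emod N := Int.emod_nonneg i (by omega)
    have h2 : i.emod N < N := Int.emod_lt_of_pos i hNpos
    refine ⟨⟨(i.emod N).toNat, by omega⟩, Set.mem_univ _, ?_⟩
    funext t
    have : ((i.emod N).toNat : ℤ) = i.emod N := Int.toNat_of_nonneg h1
    simp only [Fin.val_mk, this]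
    have key : u (i % (N:ℤ) + t) = u (i % (N:ℤ) + t + (i / (N:ℤ)) * N) := (periodic_shift hN _ _).symm
    have hde : (N:ℤ) * (i / (N:ℤ)) + i % (N:ℤ) = i := Int.mul_ediv_add_emod i N
    rw [show i.emod (N:ℤ) = i % (N:ℤ) from rfl, key, show i % (N:ℤ) + (t : ℤ) + (i / (N:ℤ)) * N = ((N:ℤ) * (i / (N:ℤ)) + i % (N:ℤ)) + t by ring,
      hde]
    exact (hw t).symm
  calc (FSet u m).ncard ≤ ((fun r : Fin N => fun t : Fin m => u ((r : ℤ) + t)) '' Set.univ).ncard :=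
        Set.ncard_le_ncard hsub (Set.toFinite _)
    _ ≤ (Set.univ : Set (Fin N)).ncard := Set.ncard_image_le (Set.toFinite _)
    _ = N := by rw [Set.ncard_univ]; simp

lemma mh_periodic {u : ℤ → B} {m : ℕ}
    (h : (FSet u (m + 1)).ncard ≤ (FSet u m).ncard) : ∃ N, 1 ≤ N ∧ Periodic u N := by
  rcases Nat.eq_zero_or_pos m with hm | hm
  · subst hm
    refine ⟨1, le_refl _, fun i => ?_⟩
    rw [ncard_fset_zero] at h
    have h1 : (FSet u 1).ncard ≤ 1 := h
    have hne := window_mem u 1 (i + 1)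
    have hne' := window_mem u 1 i
    have := (Set.ncard_le_one_iff_eq (Set.toFinite _)).mp h1
    rcases this with h' | ⟨aa, h'⟩
    · rw [h'] at hne; exact absurd hne (Set.notMem_empty _)
    · rw [h'] at hne hne'
      have e1 : (fun t : Fin 1 => u (i + 1 + t)) = fun t : Fin 1 => u (i + t) := by
        rw [Set.mem_singleton_iff.mp hne, Set.mem_singleton_iff.mp hne']
      have := congrFun e1 ⟨0, one_pos⟩
      simpa using this
  -- main case m ≥ 1
  · haveI : Finite ↥(FSet u (m + 1)) := (Set.toFinite _).to_subtype
    haveI : Finite ↥(FSet u m) := (Set.toFinite _).to_subtype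
    set dL : ↥(FSet u (m + 1)) → ↥(FSet u m) := fun w =>
      ⟨fun t => w.1 t.castSucc, by
        obtain ⟨i, hi⟩ := w.2
        exact ⟨i, fun t => by simpa using hi t.castSucc⟩⟩ with hdL
    set dF : ↥(FSet u (m + 1)) → ↥(FSet u m) := fun w =>
      ⟨fun t => w.1 t.succ, by
        obtain ⟨i, hi⟩ := w.2
        refine ⟨i + 1, fun t => ?_⟩
        show (w : Fin (m+1) → B) t.succ = u (i + 1 + t)
        rw [hi t.succ]
        congr 1
        simp [Fin.val_succ]
        push_cast
        ring⟩ with hdF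
    have hsL : Function.Surjective dL := by
      rintro ⟨v, i, hv⟩
      refine ⟨⟨fun t => u (i + t), window_mem u _ i⟩, ?_⟩
      apply Subtype.ext
      funext t
      simp only [hdL, Fin.coe_castSucc]
      exact (hv t).symm
    have hsF : Function.Surjective dF := by
      rintro ⟨v, i, hv⟩
      refine ⟨⟨fun t => u ((i - 1) + t), window_mem u _ (i - 1)⟩, ?_⟩
      apply Subtype.ext
      funext t
      simp only [hdF, Fin.val_succ]
      rw [(hv t)]
      congr 1
      push_cast
      ring
    have hcard : Nat.card ↥(FSet u (m + 1)) = Nat.card ↥(FSet u m) := by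
      have h1 : Nat.card ↥(FSet u m) ≤ Nat.card ↥(FSet u (m + 1)) :=
        Nat.card_le_card_of_surjective dL hsL
      rw [Nat.card_coe_set_eq, Nat.card_coe_set_eq] at h1 ⊢
      omega
    have hbL : Function.Bijective dL := by
      rw [Nat.bijective_iff_surjective_and_card]
      exact ⟨hsL, hcard⟩
    have hbF : Function.Bijective dF := by
      rw [Nat.bijective_iff_surjective_and_card]
      exact ⟨hsF, hcard⟩
    set eL := Equiv.ofBijective dL hbL with heL
    set eF := Equiv.ofBijective dF hbF with heF
    set σ : Equiv.Perm ↥(FSet u m) := eL.symm.trans eF with hσ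
    set Wn : ℤ → ↥(FSet u m) := fun i => ⟨fun t => u (i + t), window_mem u m i⟩ with hWn
    set Wn' : ℤ → ↥(FSet u (m + 1)) := fun i => ⟨fun t => u (i + t), window_mem u (m+1) i⟩ with hWn'
    have hstep : ∀ i : ℤ, σ (Wn i) = Wn (i + 1) := by
      intro i
      have he : eL.symm (Wn i) = Wn' i := by
        rw [Equiv.symm_apply_eq]
        apply Subtype.ext
        funext t
        simp [heL, hdL, Equiv.ofBijective_apply, hWn, hWn']
      show eF (eL.symm (Wn i)) = Wn (i + 1)
      rw [he]
      apply Subtype.ext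
      funext t
      simp only [heF, Equiv.ofBijective_apply, hdF, hWn, hWn', Fin.val_succ]
      congr 1
      push_cast
      ring
    have hiterZ : ∀ (q : ℤ) (i : ℤ), (σ ^ q) (Wn i) = Wn (i + q) := by
      intro q
      induction q using Int.induction_on with
      | zero => simp
      | succ k ih => intro i
                     rw [zpow_add_one]
                     simp only [Equiv.Perm.coe_mul, Function.comp_apply]
                     rw [hstep i, ih (i + 1)]
                     congr 1; push_cast; ring
      | pred k ih => intro i
                     rw [zpow_sub_one]
                     simp only [Equiv.Perm.coe_mul, Function.comp_apply]
                     have hinv : σ⁻¹ (Wn i) = Wn (i - 1) := by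
                       rw [Equiv.Perm.inv_def, Equiv.symm_apply_eq, hstep]
                       congr 1; ring
                     rw [hinv, ih (i - 1)]
                     congr 1; push_cast; ring
    have main : ∀ A C : ℕ, A < C → (σ ^ (A:ℤ)) (Wn 0) = (σ ^ (C:ℤ)) (Wn 0) →
        ∃ N, 1 ≤ N ∧ Periodic u N := by
      intro A C hlt hval
      refine ⟨C - A, by omega, fun i => ?_⟩
      have h1 : Wn ((A : ℤ)) = Wn ((C : ℤ)) := by
        rw [hiterZ, hiterZ] at hval
        simpa using hval
      have h2 := congrArg (fun W => (σ ^ ((i : ℤ) - A)) W) h1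
      rw [hiterZ, hiterZ] at h2
      rw [show (A : ℤ) + ((i:ℤ) - A) = i by ring] at h2
      rw [show (C : ℤ) + ((i:ℤ) - A) = i + ((C:ℤ) - A) by ring] at h2
      have key := h2.symm
      have hco := congrArg (fun W : ↥(FSet u m) => W.1 ⟨0, hm⟩) key
      simp only [hWn] at hco
      have hcast : ((C - A : ℕ) : ℤ) = (C : ℤ) - A := by
        have := hlt.le; push_cast [this]; ring
      rw [hcast]
      simpa using hco
    obtain ⟨A, C, hAC, hval⟩ :=
      Finite.exists_ne_map_eq_of_infinite (fun q : ℕ => (σ ^ (q : ℤ)) (Wn 0))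
    rcases hAC.lt_or_gt with hlt | hlt
    · exact main A C hlt hval
    · exact main C A hlt hval.symm

lemma ncard_fset_ge {u : ℤ → B} (hu : ∀ N, 1 ≤ N → ¬ Periodic u N) :
    ∀ k, k + 1 ≤ (FSet u k).ncard := by
  intro k
  induction k with
  | zero => rw [ncard_fset_zero]
  | succ k ih =>
    by_contra hcon
    push_neg at hcon
    have h : (FSet u (k + 1)).ncard ≤ (FSet u k).ncard := by omega
    obtain ⟨N, hN1, hN⟩ := mh_periodic h
    exact hu N hN1 hN

lemma exists_ufLimit (U : Ultrafilter ℕ) (f : ℕ → ℤ → B) :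
    ∃ g : ℤ → B, ∀ t : ℤ, {n | f n t = g t} ∈ U := by
  have h : ∀ t : ℤ, ∃ b : B, {n | f n t = b} ∈ U := by
    intro t
    by_contra hc
    push_neg at hc
    have hmem : ∀ b : B, {n | f n t = b}ᶜ ∈ U := fun b =>
      Ultrafilter.compl_mem_iff_notMem.mpr (hc b)
    have hint : (⋂ b : B, {n | f n t = b}ᶜ) ∈ U := Filter.iInter_mem.mpr hmem
    obtain ⟨n, hn⟩ := Filter.nonempty_of_mem hint
    simp only [Set.mem_iInter, Set.mem_compl_iff, Set.mem_setOf_eq] at hn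
    exact (hn (f n t)) rfl
  choose g hg using h
  exact ⟨g, hg⟩

lemma ufLimit_window (U : Ultrafilter ℕ) (f : ℕ → ℤ → B) (g : ℤ → B)
    (hg : ∀ t : ℤ, {n | f n t = g t} ∈ U) (E : Set ℕ) (hE : E ∈ U) (m : ℕ) (i : ℤ) :
    ∃ n ∈ E, ∀ t : Fin m, g (i + t) = f n (i + t) := by
  have hmem : (⋂ t : Fin m, {n | f n (i + t) = g (i + t)}) ∈ U :=
    Filter.iInter_mem.mpr (fun t => hg _)
  have hint : ((⋂ t : Fin m, {n | f n (i + t) = g (i + t)}) ∩ E) ∈ U :=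
    Filter.inter_mem hmem hE
  obtain ⟨n, hn1, hn2⟩ := Filter.nonempty_of_mem hint
  exact ⟨n, hn2, fun t => ((Set.mem_iInter.mp hn1 t)).symm⟩

lemma exists_uf_on (K : Set ℕ) (hK : K.Infinite) :
    ∃ U : Ultrafilter ℕ, K ∈ U ∧ ∀ E : Set ℕ, Eᶜ.Finite → E ∈ U := by
  have hne : (Filter.cofinite ⊓ Filter.principal K).NeBot :=
    hK.cofinite_inf_principal_neBot
  refine ⟨Ultrafilter.of (Filter.cofinite ⊓ Filter.principal K), ?_, ?_⟩
  · exact Ultrafilter.of_le _ (by exact Filter.mem_inf_of_right (Filter.mem_principal_self K))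
  · intro E hE
    exact Ultrafilter.of_le _ (Filter.mem_inf_of_left (Filter.mem_cofinite.mpr hE))

/-- the block sequence -/
def Xb (x : ℤ → B) (p : ℕ) : ℤ → (Fin p → B) := fun m j => x (m * p + j)

/-- factors with an occurrence at a position of residue class r mod p -/
def Sr (x : ℤ → B) (p : ℕ) [NeZero p] (r : ZMod p) (m : ℕ) : Set (Fin m → B) :=
  {w | ∃ i : ℤ, (i : ZMod p) = r ∧ ∀ t : Fin m, w t = x (i + t)}

variable {x : ℤ → B} {a : B} {p : ℕ} [NeZero p] {A : Finset (ZMod p)}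

lemma xb_periodic {N : ℕ} (hN : Periodic (Xb x p) N) (hp : 1 ≤ p) : Periodic x (N * p) := by
  intro t
  have hppos : (0 : ℤ) < p := by exact_mod_cast hp
  have hdm : (p : ℤ) * (t / p) + t % p = t := Int.mul_ediv_add_emod t p
  have h1 : 0 ≤ t % (p : ℤ) := Int.emod_nonneg t (by omega)
  have h2 : t % (p : ℤ) < p := Int.emod_lt_of_pos t hppos
  have hlt : (t % (p : ℤ)).toNat < p := by omega
  have hXb := congrFun (hN (t / (p:ℤ))) ⟨(t % (p : ℤ)).toNat, hlt⟩
  simp only [Xb, Fin.val_mk] at hXb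
  rw [Int.toNat_of_nonneg h1] at hXb
  have e1 : (t / (p:ℤ) + (N:ℤ)) * p + t % p = t + ((N * p : ℕ) : ℤ) := by push_cast; linarith [hdm]
  have e2 : (t / (p:ℤ)) * p + t % p = t := by linarith [hdm]
  rw [e1, e2] at hXb
  exact hXb

lemma fset_xb_val {k : ℕ} {v : Fin k → (Fin p → B)} {i : ℤ}
    (hi : ∀ t : Fin k, v t = Xb x p (i + t)) (j : Fin k) (l : Fin p) :
    v j l = x ((i + j) * p + l) := by
  rw [hi j]; rfl

/-- letters of block factors at positions of class in `A` equal `a`. -/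
lemma fset_xb_a (hAa : ∀ t : ℤ, ((t : ZMod p) ∈ A) → x t = a)
    {k : ℕ} {v : Fin k → (Fin p → B)} (hv : v ∈ FSet (Xb x p) k) (j : Fin k) (l : Fin p)
    (hl : ((l : ℕ) : ZMod p) ∈ A) : v j l = a := by
  obtain ⟨i, hi⟩ := hv
  rw [fset_xb_val hi j l]
  apply hAa
  have : (((i + (j:ℤ)) * p + l : ℤ) : ZMod p) = ((l : ℕ) : ZMod p) := by
    push_cast
    simp [ZMod.natCast_self]
  rw [this]; exact hl

lemma idx_bound {o K k : ℕ} (hcov : o + K * p ≤ k * p + 1) (j : Fin K) (l : Fin p) :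
    o + (j : ℕ) * p + l < k * p + 1 := by
  have h1 : ((j : ℕ) + 1) * p ≤ K * p := Nat.mul_le_mul_right p (by omega)
  have h2 : (l : ℕ) < p := l.2
  nlinarith [h1, h2]

lemma inj_shift (a : B) (o K k : ℕ) (hcov : o + K * p ≤ k * p + 1) :
    (FSet (Xb x p) K).ncard ≤ (Sr x p (-(o : ℕ) : ZMod p) (k * p + 1)).ncard := by
  classical
  set Φ : (Fin K → Fin p → B) → (Fin (k * p + 1) → B) := fun v =>
    if h : v ∈ FSet (Xb x p) K then
      (fun q : Fin (k * p + 1) => x ((Classical.choose h) * p - o + q))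
    else (fun _ => a) with hΦ
  apply Set.ncard_le_ncard_of_injOn Φ
  · -- maps into Sr
    intro v hv
    rw [hΦ]
    simp only [dif_pos hv]
    refine ⟨(Classical.choose hv) * p - o, ?_, fun q => rfl⟩
    push_cast
    simp [ZMod.natCast_self]
  · -- injective on FSet
    intro v hv v' hv' heq
    have hs := Classical.choose_spec hv
    have hs' := Classical.choose_spec hv'
    set i := Classical.choose hv
    set i' := Classical.choose hv'
    funext j l
    have hj : v j l = x ((i + j) * p + l) := fset_xb_val hs j l
    have hj' : v' j l = x ((i' + j) * p + l) := fset_xb_val hs' j l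
    have hq := congrFun heq ⟨o + (j : ℕ) * p + l, idx_bound hcov j l⟩
    rw [hΦ] at hq
    simp only [dif_pos hv, dif_pos hv', Fin.val_mk] at hq
    have e : ∀ ii : ℤ, ii * p - o + ((o + (j : ℕ) * p + l : ℕ) : ℤ) = (ii + j) * p + l := by
      intro ii; push_cast; ring
    rw [e i, e i'] at hq
    rw [hj, hj', hq]

lemma inj_one (hAa : ∀ t : ℤ, ((t : ZMod p) ∈ A) → x t = a) (hA0 : (0 : ZMod p) ∈ A)
    (K k : ℕ) (hcov : K * p ≤ k * p + 2) (hp : 1 ≤ p) :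
    (FSet (Xb x p) K).ncard ≤ (Sr x p (1 : ZMod p) (k * p + 1)).ncard := by
  classical
  have hidx : ∀ (j : Fin K) (l : Fin p), 1 ≤ (l : ℕ) → (j : ℕ) * p + l - 1 < k * p + 1 := by
    intro j l hl
    have h1 : ((j : ℕ) + 1) * p ≤ K * p := Nat.mul_le_mul_right p (by omega)
    have h2 : (l : ℕ) < p := l.2
    have h4 : (j : ℕ) * p + l < k * p + 2 := by
      calc (j : ℕ) * p + l < (j : ℕ) * p + p := Nat.add_lt_add_left h2 _
        _ = ((j : ℕ) + 1) * p := by ring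
        _ ≤ K * p := h1
        _ ≤ k * p + 2 := hcov
    have h5 := Nat.sub_lt_sub_right (show 1 ≤ (j : ℕ) * p + l by omega) h4
    simpa using h5
  set Φ : (Fin K → Fin p → B) → (Fin (k * p + 1) → B) := fun v =>
    if h : v ∈ FSet (Xb x p) K then
      (fun q : Fin (k * p + 1) => x ((Classical.choose h) * p + 1 + q))
    else (fun _ => a) with hΦ
  apply Set.ncard_le_ncard_of_injOn Φ
  · intro v hv
    rw [hΦ]
    simp only [dif_pos hv]
    refine ⟨(Classical.choose hv) * p + 1, ?_, fun q => rfl⟩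
    push_cast
    simp [ZMod.natCast_self]
  · intro v hv v' hv' heq
    have hs := Classical.choose_spec hv
    have hs' := Classical.choose_spec hv'
    set i := Classical.choose hv
    set i' := Classical.choose hv'
    funext j l
    rcases Nat.eq_zero_or_pos (l : ℕ) with hl0 | hl1
    · have ha : v j l = a := fset_xb_a hAa hv j l (by rw [hl0]; simpa using hA0)
      have ha' : v' j l = a := fset_xb_a hAa hv' j l (by rw [hl0]; simpa using hA0)
      rw [ha, ha']
    · have hj : v j l = x ((i + j) * p + l) := fset_xb_val hs j l
      have hj' : v' j l = x ((i' + j) * p + l) := fset_xb_val hs' j l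
      have hq := congrFun heq ⟨(j : ℕ) * p + l - 1, hidx j l hl1⟩
      rw [hΦ] at hq
      simp only [dif_pos hv, dif_pos hv', Fin.val_mk] at hq
      have e : ∀ ii : ℤ, ii * p + 1 + (((j : ℕ) * p + l - 1 : ℕ) : ℤ) = (ii + j) * p + l := by
        intro ii
        have : (((j : ℕ) * p + l - 1 : ℕ) : ℤ) = (j : ℕ) * p + l - 1 := by
          have : 1 ≤ (j : ℕ) * p + (l : ℕ) := by omega
          push_cast [this]
          ring
        rw [this]; push_cast; ring
      rw [e i, e i'] at hq
      rw [hj, hj', hq]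

lemma x_aperiodic (hcomp : ∀ n, (FSet x n).ncard = n + 1) :
    ∀ N, 1 ≤ N → ¬ Periodic x N := by
  intro N hN1 hper
  have := ncard_le_of_periodic hper hN1 N
  rw [hcomp N] at this
  omega

lemma xb_ncard_ge (hcomp : ∀ n, (FSet x n).ncard = n + 1) (hp : 1 ≤ p) :
    ∀ K, K + 1 ≤ (FSet (Xb x p) K).ncard := by
  apply ncard_fset_ge
  intro N hN1 hper
  exact x_aperiodic hcomp (N * p) (Nat.mul_pos hN1 hp) (xb_periodic hper hp)

lemma exists_double (hAa : ∀ t : ℤ, ((t : ZMod p) ∈ A) → x t = a) (hA0 : (0 : ZMod p) ∈ A)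
    (hp : 2 ≤ p) (hcomp : ∀ n, (FSet x n).ncard = n + 1) (k : ℕ) (hk : 1 ≤ k) :
    ∃ (w : Fin (k * p + 1) → B) (r s : ZMod p), r ≠ s ∧
      w ∈ Sr x p r (k * p + 1) ∧ w ∈ Sr x p s (k * p + 1) := by
  classical
  by_contra hnd
  push_neg at hnd
  have hp1 : 1 ≤ p := by omega
  have hX := xb_ncard_ge hcomp hp1
  set S : ZMod p → Set (Fin (k * p + 1) → B) := fun r => Sr x p r (k * p + 1) with hS
  -- each word lies in the factor set
  have hsub : ∀ r, S r ⊆ FSet x (k * p + 1) := by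
    rintro r w ⟨i, hir, hiw⟩
    exact ⟨i, hiw⟩
  -- injection from the sigma type
  letI : ∀ r, Fintype ↥(S r) := fun r => (Set.toFinite _).fintype
  have hinj : Function.Injective
      (fun q : (Σ r : ZMod p, ↥(S r)) => (⟨q.2.1, hsub q.1 q.2.2⟩ : ↥(FSet x (k * p + 1)))) := by
    rintro ⟨r, w, hw⟩ ⟨r', w', hw'⟩ h
    have hww : w = w' := congrArg Subtype.val h
    subst hww
    have hrr : r = r' := by
      by_contra hne
      exact hnd w r r' hne hw hw'
    subst hrr
    rfl
  have hcard : Nat.card (Σ r : ZMod p, ↥(S r)) ≤ Nat.card ↥(FSet x (k * p + 1)) :=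
    Nat.card_le_card_of_injective _ hinj
  have hsigma : Nat.card (Σ r : ZMod p, ↥(S r)) = ∑ r : ZMod p, (S r).ncard := by
    rw [Nat.card_eq_fintype_card, Fintype.card_sigma]
    congr 1
    funext r
    rw [← Nat.card_coe_set_eq, Nat.card_eq_fintype_card]
  have hFcard : Nat.card ↥(FSet x (k * p + 1)) = k * p + 2 := by
    rw [Nat.card_coe_set_eq, hcomp]
  -- lower bounds for the classes
  have hb0 : k + 1 ≤ (S 0).ncard := by
    have h := inj_shift (x := x) (p := p) a 0 k k (by omega)
    simp only [Nat.cast_zero, neg_zero] at h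
    exact le_trans (hX k) h
  have hbm1 : k + 1 ≤ (S (-1)).ncard := by
    have h := inj_shift (x := x) (p := p) a 1 k k (by omega)
    simp only [Nat.cast_one] at h
    exact le_trans (hX k) h
  have hrest : ∀ r : ZMod p, k ≤ (S r).ncard := by
    intro r
    have hval : ((-r).val : ZMod p) = -r := ZMod.natCast_rightInverse _
    have hvlt : (-r).val < p := ZMod.val_lt _
    have h := inj_shift (x := x) (p := p) a ((-r).val) (k - 1) k (by
      have h2 : (k - 1) * p + p = k * p := by
        have : k - 1 + 1 = k := by omega
        calc (k-1) * p + p = ((k-1) + 1) * p := by ring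
          _ = k * p := by rw [this]
      omega)
    rw [hval, neg_neg] at h
    have h2 := hX (k - 1)
    have h3 : k ≤ (Sr x p r (k * p + 1)).ncard := by omega
    exact h3
  rcases Nat.lt_or_ge p 3 with hp2 | hp3
  · -- p = 2
    have hb1 : k + 2 ≤ (S 1).ncard := by
      have hcov : (k + 1) * p ≤ k * p + 2 := by
        have h2 : (k + 1) * p = k * p + p := by ring
        omega
      have h := inj_one (x := x) (p := p) (A := A) hAa hA0 (k + 1) k hcov (by omega)
      exact le_trans (hX (k + 1)) h
    have hdisj : Disjoint (S 0) (S 1) := by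
      rw [Set.disjoint_left]
      intro w hw0 hw1
      have h01 : (0 : ZMod p) ≠ 1 := by
        haveI : Fact (1 < p) := ⟨by omega⟩
        intro h
        have := congrArg ZMod.val h
        rw [ZMod.val_zero, ZMod.val_one] at this
        omega
      exact hnd w 0 1 h01 hw0 hw1
    have huni : (S 0 ∪ S 1).ncard = (S 0).ncard + (S 1).ncard :=
      Set.ncard_union_eq hdisj (Set.toFinite _) (Set.toFinite _)
    have hsubu : (S 0 ∪ S 1) ⊆ FSet x (k * p + 1) :=
      Set.union_subset (hsub 0) (hsub 1)
    have hle : (S 0 ∪ S 1).ncard ≤ (FSet x (k * p + 1)).ncard :=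
      Set.ncard_le_ncard hsubu (Set.toFinite _)
    rw [hcomp] at hle
    have hp2' : p = 2 := by omega
    have hd : k * p = 2 * k := by rw [hp2']; ring
    omega
  · -- p ≥ 3
    have hb1 : k + 1 ≤ (S 1).ncard := by
      have h := inj_one (x := x) (p := p) (A := A) hAa hA0 k k (by omega) (by omega)
      exact le_trans (hX k) h
    set T : Finset (ZMod p) := {0, 1, -1} with hT
    haveI : Fact (1 < p) := ⟨by omega⟩
    have h01 : (0 : ZMod p) ≠ 1 := by
      intro h
      have := congrArg ZMod.val h
      rw [ZMod.val_zero, ZMod.val_one] at this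
      omega
    have h0m1 : (0 : ZMod p) ≠ -1 := by
      intro h
      have h' : (1 : ZMod p) = 0 := by
        have := congrArg Neg.neg h
        simpa using this.symm
      exact h01 h'.symm
    have h1m1 : (1 : ZMod p) ≠ -1 := by
      intro h
      have h2 : ((2 : ℕ) : ZMod p) = 0 := by
        push_cast
        rw [show (2 : ZMod p) = 1 + 1 by norm_num]
        nth_rewrite 2 [h]
        ring
      have hdvd := (ZMod.natCast_eq_zero_iff 2 p).mp h2
      have := Nat.le_of_dvd (by omega) hdvd
      omega
    have hTcard : T.card = 3 := by
      rw [hT]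
      rw [Finset.card_insert_of_notMem (by simp [h01, h0m1]),
          Finset.card_insert_of_notMem (by simp [h1m1]), Finset.card_singleton]
    have hTsub : T ⊆ Finset.univ := Finset.subset_univ T
    have hsplit : ∑ r ∈ Finset.univ \ T, (S r).ncard + ∑ r ∈ T, (S r).ncard
        = ∑ r : ZMod p, (S r).ncard := Finset.sum_sdiff hTsub
    have hTsum : ∑ r ∈ T, (S r).ncard = (S 0).ncard + (S 1).ncard + (S (-1)).ncard := by
      rw [hT, Finset.sum_insert (by simp [h01, h0m1]),
          Finset.sum_insert (by simp [h1m1]), Finset.sum_singleton]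
      ring
    have hcardu : (Finset.univ : Finset (ZMod p)).card = p := by
      rw [Finset.card_univ, ZMod.card]
    have hsd : (Finset.univ \ T).card = p - 3 := by
      rw [Finset.card_sdiff_of_subset hTsub, hcardu, hTcard]
    have hlow : (p - 3) * k ≤ ∑ r ∈ Finset.univ \ T, (S r).ncard := by
      calc (p - 3) * k = (Finset.univ \ T).card • k := by rw [hsd]; simp [smul_eq_mul]
        _ ≤ ∑ r ∈ Finset.univ \ T, (S r).ncard :=
            Finset.card_nsmul_le_sum _ _ _ (fun r _ => hrest r)
    have hmul : (p - 3) * k + 3 * k = p * k := by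
      rw [Nat.sub_mul]
      have h3k : 3 * k ≤ p * k := Nat.mul_le_mul_right k hp3
      omega
    have hkp : p * k = k * p := Nat.mul_comm p k
    omega

lemma double_forces (hAa : ∀ t : ℤ, ((t : ZMod p) ∈ A) → x t = a) {k : ℕ}
    {w : Fin (k * p + 1) → B} {r s : ZMod p}
    (hwr : w ∈ Sr x p r (k * p + 1)) (hws : w ∈ Sr x p s (k * p + 1)) :
    ∃ i : ℤ, ∀ t : ℤ, i ≤ t → t ≤ i + (k * p : ℕ) →
      ((t : ZMod p) ∈ A ∨ ((t : ZMod p) - (r - s)) ∈ A) → x t = a := by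
  obtain ⟨i, hir, hiw⟩ := hwr
  obtain ⟨i', his, hiw'⟩ := hws
  refine ⟨i, fun t ht1 ht2 hcase => ?_⟩
  rcases hcase with hA | hA
  · exact hAa t hA
  · have hq2 : t - i < ((k * p + 1 : ℕ) : ℤ) := by push_cast; omega
    have hq1 : (0 : ℤ) ≤ t - i := by omega
    set q : Fin (k * p + 1) := ⟨(t - i).toNat, by omega⟩ with hq
    have hqv : ((q : ℕ) : ℤ) = t - i := by
      simp only [hq, Fin.val_mk]
      exact Int.toNat_of_nonneg hq1
    have e1 : x t = w q := by
      rw [hiw q, hqv, show i + (t - i) = t by ring]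
    have e2 : w q = x (i' + (t - i)) := by rw [hiw' q, hqv]
    rw [e1, e2]
    apply hAa
    have : ((i' + (t - i) : ℤ) : ZMod p) = (t : ZMod p) - (r - s) := by
      push_cast
      rw [his, hir]
      ring
    rw [this]
    exact hA

lemma const_contra {x : ℤ → B} {a : B} (hxcomp : ∀ n, (FSet x n).ncard = n + 1)
    (hconst : ∀ t : ℤ, x t = a) : False := by
  have hsub : FSet x 1 ⊆ {fun _ : Fin 1 => a} := by
    rintro w ⟨i, hw⟩
    have : w = fun _ : Fin 1 => a := by
      funext t
      rw [hw t, hconst]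
    simp [this]
  have := Set.ncard_le_ncard hsub (Set.toFinite _)
  rw [hxcomp 1, Set.ncard_singleton] at this
  omega

lemma fset_eq_of_subf {x y : ℤ → B} (hUR : UniformlyRecurrent y) (hsub : Subf x y) (n : ℕ) :
    FSet x n = FSet y n :=
  Set.Subset.antisymm (fset_subset_of_subf hsub n)
    (fset_subset_of_subf (subf_of_ur hUR hsub) n)

lemma master (y : ℤ → B) (hUR : UniformlyRecurrent y)
    (hycomp : ∀ n, (FSet y n).ncard = n + 1) :
    ∀ (μ : ℕ) (p : ℕ), 2 ≤ p → ∀ (A : Finset (ZMod p)), (0 : ZMod p) ∈ A →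
      p * p + (p - A.card) ≤ μ → ∀ (x : ℤ → B) (a : B), Subf x y →
      (∀ t : ℤ, ((t : ZMod p) ∈ A) → x t = a) → False := by
  intro μ
  induction μ using Nat.strong_induction_on with
  | _ μ IH =>
    intro p hp2 A hA0 hμ x a hsub hAa
    haveI : NeZero p := ⟨by omega⟩
    have hxcomp : ∀ n, (FSet x n).ncard = n + 1 := by
      intro n
      rw [fset_eq_of_subf hUR hsub n, hycomp n]
    -- get, for every k, a doubly-occurring word and the forced window
    have hdd : ∀ k : ℕ, ∃ d : ZMod p, d ≠ 0 ∧ ∃ i : ℤ, ∀ t : ℤ, i ≤ t →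
        t ≤ i + ((k + 1) * p : ℕ) →
        ((t : ZMod p) ∈ A ∨ ((t : ZMod p) - d) ∈ A) → x t = a := by
      intro k
      obtain ⟨w, r, s, hrs, hwr, hws⟩ := exists_double hAa hA0 hp2 hxcomp (k + 1) (by omega)
      refine ⟨r - s, by simpa [sub_eq_zero] using hrs, ?_⟩
      exact double_forces hAa hwr hws
    choose D hD0 I hI using hdd
    obtain ⟨d, hdK⟩ := Finite.exists_infinite_fiber D
    set K : Set ℕ := D ⁻¹' {d} with hK
    have hKinf : K.Infinite := Set.infinite_coe_iff.mp hdK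
    obtain ⟨k0, hk0⟩ := hKinf.nonempty
    have hd0 : d ≠ 0 := hk0 ▸ hD0 k0
    by_cases hinv : A.image (· + d) ⊆ A
    · -- invariant case: A is closed under adding d
      have hnsmul : ∀ n : ℕ, (n • d) ∈ A := by
        intro n
        induction n with
        | zero => simpa using hA0
        | succ n ih =>
          have h1 : (n • d) + d ∈ A.image (· + d) := Finset.mem_image_of_mem _ ih
          have h2 := hinv h1
          rwa [succ_nsmul]
      have hzmul : ∀ z : ℤ, ((z : ZMod p) * d) ∈ A := by
        intro z
        have hnn : (0:ℤ) ≤ z % p := Int.emod_nonneg z (by exact_mod_cast (by omega : p ≠ 0))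
        set n : ℕ := (z % (p:ℤ)).toNat with hn
        have hcast : ((z : ZMod p)) = ((n : ℕ) : ZMod p) := by
          have h1 : ((n : ℕ) : ℤ) = z % p := Int.toNat_of_nonneg hnn
          have h2 : ((z % (p:ℤ) : ℤ) : ZMod p) = ((z : ℤ) : ZMod p) := by
            rw [ZMod.intCast_eq_intCast_iff]
            exact Int.emod_emod_of_dvd z dvd_rfl
          rw [← h2, ← h1]
          norm_cast
        rw [hcast, ← nsmul_eq_mul]
        exact hnsmul n
      set g : ℕ := Nat.gcd (d.val) p with hg
      have hgdvd : ∀ t : ℤ, (g : ℤ) ∣ t → ((t : ZMod p) ∈ A) := by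
        rintro t ⟨m, hm⟩
        have hbez : (g : ℤ) = d.val * Nat.gcdA d.val p + p * Nat.gcdB d.val p :=
          Nat.gcd_eq_gcd_ab _ _
        have hkey : (t : ZMod p) = ((Nat.gcdA d.val p * m : ℤ) : ZMod p) * d := by
          subst hm
          rw [hbez]
          push_cast
          rw [ZMod.natCast_rightInverse d, ZMod.natCast_self]
          ring
        rw [hkey]
        exact hzmul _
      rcases Nat.lt_or_ge g 2 with hg1 | hg2
      · have hgpos : 0 < g := Nat.gcd_pos_of_pos_right _ (by omega)
        have hg1' : g = 1 := by omega
        apply const_contra hxcomp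
        intro t
        exact hAa t (hgdvd t (by rw [hg1']; exact one_dvd t))
      · haveI : NeZero g := ⟨by omega⟩
        have hdval : d.val ≠ 0 := fun h => hd0 ((ZMod.val_eq_zero d).mp h)
        have hdvltp : d.val < p := ZMod.val_lt d
        have hgle : g ≤ d.val := Nat.gcd_le_left _ (by omega)
        have hglt : g < p := by omega
        have hmeas : g * g + (g - 1) < μ := by
          have hp1 : (g+1)*(g+1) ≤ p*p := Nat.mul_le_mul (by omega) (by omega)
          have he : (g+1)*(g+1) = g*g + 2*g + 1 := by ring
          omega
        refine IH (g * g + (g - 1)) hmeas g hg2 {0} (Finset.mem_singleton_self 0)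
          (by simp) x a hsub ?_
        intro t ht
        have hdvd : (g:ℤ) ∣ t := by
          have h1 := (ZMod.intCast_zmod_eq_zero_iff_dvd t g).mp (by simpa using ht)
          exact_mod_cast h1
        exact hAa t (hgdvd t hdvd)
    · -- growth case
      rw [Finset.not_subset] at hinv
      obtain ⟨β, hβim, hβA⟩ := hinv
      set A' : Finset (ZMod p) := A ∪ A.image (· + d) with hA'
      have hAsub : A ⊆ A' := Finset.subset_union_left
      have hcardlt : A.card < A'.card := Finset.card_lt_card
        ⟨hAsub, fun hsub' => hβA (hsub' (Finset.mem_union_right _ hβim))⟩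
      have hA'le : A'.card ≤ p := by
        have := Finset.card_le_univ A'
        rwa [ZMod.card] at this
      set c : ℕ → ℤ := fun k => (I k / (p:ℤ) + 1 + ((k / 2 : ℕ) : ℤ)) * p with hc
      obtain ⟨U, hKU, hcof⟩ := exists_uf_on K hKinf
      obtain ⟨x', hx'⟩ := exists_ufLimit U (fun k t => x (c k + t))
      have hwin : ∀ (k : ℕ) (t : ℤ), k ∈ K → 2 * t.natAbs ≤ k → ((t : ZMod p) ∈ A') →
          x (c k + t) = a := by
        intro k t hkK hkt htA'
        have hpz : (0:ℤ) < p := by exact_mod_cast (by omega : 0 < p)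
        have hdm : (p:ℤ) * (I k / p) + I k % p = I k := Int.mul_ediv_add_emod _ _
        have hr0 : 0 ≤ I k % (p:ℤ) := Int.emod_nonneg _ (by omega)
        have hr1 : I k % (p:ℤ) < p := Int.emod_lt_of_pos _ hpz
        have hmk : (t.natAbs : ℤ) ≤ ((k/2 : ℕ) : ℤ) := by
          have h1 : t.natAbs ≤ k / 2 := (Nat.le_div_iff_mul_le (by omega)).mpr (by omega)
          exact_mod_cast h1
        have habs1 : -(t.natAbs : ℤ) ≤ t := by
          have h0 := neg_abs_le t
          rwa [Int.abs_eq_natAbs] at h0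
        have habs2 : t ≤ (t.natAbs : ℤ) := Int.le_natAbs
        have hk2 : ((k/2 : ℕ) : ℤ) * 2 ≤ k := by exact_mod_cast Nat.div_mul_le_self k 2
        have hhalfnn : (0:ℤ) ≤ ((k/2 : ℕ) : ℤ) := by positivity
        have hmp : ((k/2 : ℕ) : ℤ) ≤ ((k/2 : ℕ) : ℤ) * p :=
          le_mul_of_one_le_right hhalfnn (by omega)
        have hkp : ((k/2 : ℕ) : ℤ) * 2 * p ≤ (k:ℤ) * p :=
          mul_le_mul_of_nonneg_right hk2 (le_of_lt hpz)
        have h1 : I k ≤ c k + t := by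
          rw [hc]; simp only
          nlinarith [hmk, habs1, hmp, hdm, hr1]
        have h2 : c k + t ≤ I k + ((k + 1) * p : ℕ) := by
          rw [hc]; simp only
          have hcast : (((k+1)*p : ℕ) : ℤ) = ((k:ℤ)+1) * p := by push_cast; ring
          rw [hcast]
          nlinarith [hmk, habs2, hkp, hmp, hdm, hr0]
        have hDk : D k = d := hkK
        have hclass : ((c k + t : ℤ) : ZMod p) = (t : ZMod p) := by
          rw [hc]; simp only
          push_cast
          rw [ZMod.natCast_self]
          ring
        apply hI k (c k + t) h1 h2
        rw [hclass, hDk]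
        rcases Finset.mem_union.mp htA' with h | h
        · exact Or.inl h
        · obtain ⟨γ, hγA, hγ⟩ := Finset.mem_image.mp h
          refine Or.inr ?_
          rw [← hγ]
          simpa using hγA
      have hx'A' : ∀ t : ℤ, ((t : ZMod p) ∈ A') → x' t = a := by
        intro t htA'
        have hE1 : {k | x (c k + t) = x' t} ∈ U := hx' t
        have hE3 : {k | 2 * t.natAbs ≤ k} ∈ U := by
          apply hcof
          have : {k | 2 * t.natAbs ≤ k}ᶜ ⊆ Set.Iio (2 * t.natAbs) := by
            intro k hk
            simp only [Set.mem_compl_iff, Set.mem_setOf_eq, not_le] at hk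
            exact hk
          exact Set.Finite.subset (Set.finite_Iio _) this
        have hint : ({k | x (c k + t) = x' t} ∩ (K ∩ {k | 2 * t.natAbs ≤ k})) ∈ U :=
          Filter.inter_mem hE1 (Filter.inter_mem hKU hE3)
        obtain ⟨k, hk1, hk2, hk3⟩ := Filter.nonempty_of_mem hint
        rw [← hk1]
        exact hwin k t hk2 hk3 htA'
      have hsub' : Subf x' y := by
        intro m i
        obtain ⟨n, _, hagree⟩ := ufLimit_window U (fun k t => x (c k + t)) x' hx'
          Set.univ Filter.univ_mem m i
        obtain ⟨j, hj⟩ := hsub m (c n + i)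
        refine ⟨j, fun t => ?_⟩
        rw [hagree t, show c n + (i + (t:ℤ)) = c n + i + t by ring]
        exact hj t
      have hmeas : p * p + (p - A'.card) < μ := by omega
      exact IH _ hmeas p hp2 A' (hAsub hA0) le_rfl x' a hsub' hx'A'

end
end STP

/-- A sturmian sequence and a Toeplitz sequence have only finitely many factors in
common. -/
theorem sturmian_toeplitz_finite_common_factors
    {B : Type*} [Fintype B]
    (y : ℤ → B) (hy : IsSturmian y)
    (z : ℤ → B) (hz : IsToeplitz z) :
    {w : List B | IsFactor w y ∧ IsFactor w z}.Finite := by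
  by_contra hinf

  obtain ⟨p, hp2, hzp⟩ := hz 0
  haveI : NeZero p := ⟨by omega⟩
  set a : B := z 0 with ha
  -- long common factors
  have hlong : ∀ L : ℕ, ∃ w : List B, (IsFactor w y ∧ IsFactor w z) ∧ L + 1 ≤ w.length := by
    intro L
    by_contra hcon
    push_neg at hcon
    apply hinf
    apply Set.Finite.subset (List.finite_length_le (α := B) L)
    intro w hw
    have := hcon w hw
    simpa using (by omega : w.length ≤ L)
  choose W hW hWlen using fun n : ℕ => hlong (2 * n + p + 2)
  have hWy : ∀ n, IsFactor (W n) y := fun n => (hW n).1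
  have hWz : ∀ n, IsFactor (W n) z := fun n => (hW n).2
  choose Iz hIz using fun n => hWz n
  choose Iy hIy using fun n => hWy n
  -- translation between z and y inside the occurrence window
  have hzy : ∀ (n : ℕ) (s : ℤ), 0 ≤ s → s < (W n).length → z (Iz n + s) = y (Iy n + s) := by
    intro n s hs0 hs1
    have hlt : s.toNat < (W n).length := by omega
    have h1 := hIz n ⟨s.toNat, hlt⟩
    have h2 := hIy n ⟨s.toNat, hlt⟩
    simp only [Fin.val_mk] at h1 h2
    rw [Int.toNat_of_nonneg hs0] at h1 h2
    rw [h1, h2]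
  -- centers: multiples of p just past Iz n + n
  set c : ℕ → ℤ := fun n => ((Iz n + n) / (p:ℤ) + 1) * p with hc
  have hcb : ∀ n : ℕ, Iz n + n < c n ∧ c n ≤ Iz n + n + p := by
    intro n
    have hpz : (0:ℤ) < p := by exact_mod_cast (by omega : 0 < p)
    have hdm : (p:ℤ) * ((Iz n + n) / p) + (Iz n + n) % p = Iz n + n := Int.mul_ediv_add_emod _ _
    have hr0 : 0 ≤ (Iz n + n) % (p:ℤ) := Int.emod_nonneg _ (by omega)
    have hr1 : (Iz n + n) % (p:ℤ) < p := Int.emod_lt_of_pos _ hpz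
    constructor
    · rw [hc]; simp only; nlinarith [hdm, hr1]
    · rw [hc]; simp only; nlinarith [hdm, hr0]
  obtain ⟨U, -, hcof⟩ := STP.exists_uf_on Set.univ Set.infinite_univ
  obtain ⟨x₀, hx₀⟩ := STP.exists_ufLimit U (fun n t => z (c n + t))
  -- a at all multiples of p
  have hx₀a : ∀ t : ℤ, ((t : ZMod p) ∈ ({0} : Finset (ZMod p))) → x₀ t = a := by
    intro t ht
    have hdvd : (p:ℤ) ∣ t := by
      have h1 : ((t : ℤ) : ZMod p) = 0 := by simpa using ht
      exact (ZMod.intCast_zmod_eq_zero_iff_dvd t p).mp h1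
    obtain ⟨m, hm⟩ := hdvd
    have hall : ∀ n : ℕ, z (c n + t) = a := by
      intro n
      have he : c n + t = 0 + ((Iz n + n) / (p:ℤ) + 1 + m) * p := by
        rw [hc]; simp only; rw [hm]; ring
      rw [he, hzp]
    obtain ⟨n, hn⟩ := Filter.nonempty_of_mem (hx₀ t)
    rw [← hn, hall n]
  -- every factor of x₀ is a factor of y
  have hsub₀ : STP.Subf x₀ y := by
    intro m i
    have hE : {n : ℕ | i.natAbs + m ≤ n} ∈ U := by
      apply hcof
      apply Set.Finite.subset (Set.finite_Iio (i.natAbs + m))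
      intro n hn
      simp only [Set.mem_compl_iff, Set.mem_setOf_eq, not_le] at hn
      exact hn
    obtain ⟨n, hnE, hagree⟩ := STP.ufLimit_window U (fun k t => z (c k + t)) x₀ hx₀
      {n : ℕ | i.natAbs + m ≤ n} hE m i
    have hnE' : i.natAbs + m ≤ n := hnE
    have habs1 : -(i.natAbs : ℤ) ≤ i := by
      have h0 := neg_abs_le i
      rwa [Int.abs_eq_natAbs] at h0
    have habs2 : i ≤ (i.natAbs : ℤ) := Int.le_natAbs
    obtain ⟨hcb1, hcb2⟩ := hcb n
    have hlen : 2 * n + p + 2 + 1 ≤ (W n).length := hWlen n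
    refine ⟨Iy n + (c n + i - Iz n), fun t => ?_⟩
    have ht0 : (0:ℤ) ≤ (t:ℤ) := Int.ofNat_nonneg _
    have ht1 : (t:ℤ) < m := by exact_mod_cast t.2
    have hs0 : 0 ≤ c n + i + t - Iz n := by omega
    have hs1 : c n + i + t - Iz n < (W n).length := by
      have : ((W n).length : ℤ) ≥ 2 * n + p + 3 := by exact_mod_cast hlen
      omega
    have h1 := hzy n (c n + i + t - Iz n) hs0 hs1
    rw [hagree t]
    have e1 : c n + (i + t) = Iz n + (c n + i + t - Iz n) := by ring
    have e2 : Iy n + (c n + i - Iz n) + t = Iy n + (c n + i + t - Iz n) := by ring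
    rw [e1, h1, e2]
  -- y's complexity as ncard
  have hycomp : ∀ n, (STP.FSet y n).ncard = n + 1 := by
    intro n
    rw [← STP.complexity_eq_ncard, hy.2 n]
  exact STP.master y hy.1 hycomp (p * p + p) p (by omega) {0}
    (Finset.mem_singleton_self 0) (by simp) x₀ a hsub₀ hx₀a
end
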